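/- Let (Y, π, ≤) be a compact ordered space, p : E → Y^↑ a local homeomorphism, and s, t global sections of p. Let (K_i)_{i∈I} be a nonempty family of compact saturated subsets of Y^↑ that is down-directed (for all i, j ∈ I there exists k ∈ I with K_k ⊆ K_i ∩ K_j). If s(y) = t(y) for all y ∈ ⋂_{i∈I} K_i, then there exists i ∈ I such that s(y) = t(y) for all y ∈ K_i. -/

import Mathlib

/-- The *upper topology* `π^↑` associated to a topology and a preorder:
its open sets are exactly the open upper sets. -/
def upTop (Y : Type*) [TopologicalSpace Y] [Preorder Y] : TopologicalSpace Y where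
  IsOpen U := IsOpen U ∧ IsUpperSet U
  isOpen_univ := ⟨isOpen_univ, isUpperSet_univ⟩
  isOpen_inter := fun _ _ hU hV => ⟨hU.1.inter hV.1, hU.2.inter hV.2⟩
  isOpen_sUnion := fun _ hS =>
    ⟨isOpen_sUnion fun U hU => (hS U hU).1, isUpperSet_sUnion fun U hU => (hS U hU).2⟩

/-- `K` is compact and saturated with respect to the upper topology `π^↑`. -/
def CompSatUp {Y : Type*} [TopologicalSpace Y] [Preorder Y] (K : Set Y) : Prop :=
  @IsCompact Y (upTop Y) K ∧
    ∃ 𝒰 : Set (Set Y), (∀ U ∈ 𝒰, IsOpen U ∧ IsUpperSet U) ∧ K = ⋂₀ 𝒰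

/-- The lower closure of a closed set in a compact Hausdorff space with closed order
is closed. -/
lemma isClosed_lowerClosure_of_isClosed {Y : Type*} [TopologicalSpace Y] [CompactSpace Y]
    [T2Space Y] [Preorder Y] [OrderClosedTopology Y] {C : Set Y} (hC : IsClosed C) :
    IsClosed (↑(lowerClosure C) : Set Y) := by
  have h1 : IsClosed {q : Y × Y | q.1 ∈ C ∧ q.2 ≤ q.1} :=
    (hC.preimage continuous_fst).inter (isClosed_le continuous_snd continuous_fst)
  have h3 : (↑(lowerClosure C) : Set Y) = Prod.snd '' {q : Y × Y | q.1 ∈ C ∧ q.2 ≤ q.1} := by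
    ext x; simp [lowerClosure]; exact Iff.rfl
  rw [h3]
  exact (h1.isCompact.image continuous_snd).isClosed

/-- The equalizer of two sections of a local homeomorphism is open. -/
lemma isOpen_eq_of_sections {X E : Type*} [TopologicalSpace X] [TopologicalSpace E]
    {p : E → X} (hp : IsLocalHomeomorph p) {s t : X → E}
    (hs : Continuous s) (hps : ∀ x, p (s x) = x)
    (ht : Continuous t) (hpt : ∀ x, p (t x) = x) :
    IsOpen {x | s x = t x} := by
  rw [isOpen_iff_forall_mem_open]
  intro x hx
  obtain ⟨e, hse, hpe⟩ := hp (s x)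
  refine ⟨s ⁻¹' e.source ∩ t ⁻¹' e.source, ?_, ?_, ?_⟩
  · rintro z ⟨hz1, hz2⟩
    have : e (s z) = e (t z) := by
      rw [← hpe] at *
      simp only [hps, hpt]
    exact e.injOn hz1 hz2 this
  · exact (hs.isOpen_preimage _ e.open_source).inter (ht.isOpen_preimage _ e.open_source)
  · exact ⟨hse, show t x ∈ e.source from hx ▸ hse⟩

/-- A compact saturated set in the upper topology of a compact ordered space is closed
in the original topology. -/
lemma isClosed_of_compSatUp {Y : Type*} [TopologicalSpace Y] [CompactSpace Y]
    [T2Space Y] [PartialOrder Y] [OrderClosedTopology Y] {K : Set Y}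
    (h : CompSatUp K) : IsClosed K := by
  obtain ⟨hcomp, 𝒰, h𝒰, hKeq⟩ := h
  have hupper : IsUpperSet K := by
    rw [hKeq]; exact isUpperSet_sInter fun U hU => (h𝒰 U hU).2
  rw [← isOpen_compl_iff, isOpen_iff_forall_mem_open]
  intro y hy
  -- for each k ∈ K, ¬ k ≤ y
  have hnle : ∀ k ∈ K, ¬ k ≤ y := fun k hk hle => hy (hupper hle hk)
  -- separate Ici k from y by disjoint opens
  have hsep : ∀ k ∈ K, ∃ W N : Set Y, IsOpen W ∧ IsOpen N ∧ Set.Ici k ⊆ W ∧ y ∈ N ∧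
      Disjoint W N := by
    intro k hk
    have hd : Disjoint (Set.Ici k) ({y} : Set Y) := by
      simp [Set.disjoint_singleton_right, hnle k hk]
    obtain ⟨W, N, hW, hN, h1, h2, h3⟩ := NormalSpace.normal _ _ isClosed_Ici
      isClosed_singleton hd
    exact ⟨W, N, hW, hN, h1, h2 rfl, h3⟩
  choose W N hWopen hNopen hIciW hyN hWN using hsep
  -- the open upper sets U k
  set U : ∀ k ∈ K, Set Y := fun k hk => (↑(lowerClosure (W k hk)ᶜ) : Set Y)ᶜ with hU
  have hUopen : ∀ k (hk : k ∈ K), @IsOpen Y (upTop Y) (U k hk) := by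
    intro k hk
    show IsOpen (U k hk) ∧ IsUpperSet (U k hk)
    exact ⟨(isClosed_lowerClosure_of_isClosed (hWopen k hk).isClosed_compl).isOpen_compl,
      (lowerClosure _).lower.compl⟩
  have hkU : ∀ k (hk : k ∈ K), k ∈ U k hk := by
    intro k hk hmem
    obtain ⟨c, hc, hkc⟩ := hmem
    exact hc (hIciW k hk hkc)
  have hUW : ∀ k (hk : k ∈ K), U k hk ⊆ W k hk := by
    intro k hk x hx
    by_contra hxW
    exact hx ⟨x, hxW, le_refl x⟩
  -- K is compact in upTop, covered by the U k
  have hcover : K ⊆ ⋃ k : K, U k.1 k.2 := fun k hk =>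
    Set.mem_iUnion.2 ⟨⟨k, hk⟩, hkU k hk⟩
  obtain ⟨F, hF⟩ := @IsCompact.elim_finite_subcover Y (upTop Y) K ↥K hcomp
    (fun k : K => U k.1 k.2) (fun k => hUopen k.1 k.2) hcover
  -- y has the open neighborhood ⋂ k ∈ F, N k
  refine ⟨⋂ k ∈ F, N k.1 k.2, ?_, ?_, ?_⟩
  · intro z hz hzK
    obtain ⟨i, hiF, hiU⟩ := Set.mem_iUnion₂.1 (hF hzK)
    have hzN : z ∈ N i.1 i.2 := Set.mem_iInter₂.1 hz i hiF
    exact (hWN i.1 i.2).ne_of_mem (hUW i.1 i.2 hiU) hzN rfl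
  · exact isOpen_biInter_finset fun k _ => hNopen k.1 k.2
  · exact Set.mem_iInter₂.2 fun k _ => hyN k.1 k.2

/-- Let `p : E → Y^↑` be a local homeomorphism over a compact ordered space and let
`s, t` be global sections of `p`. If `s` and `t` agree on the intersection of a nonempty
down-directed family of compact saturated subsets of `Y^↑`, then they already agree on
some member of the family. -/
theorem stmt7 {Y E : Type*} [TopologicalSpace Y] [CompactSpace Y] [T2Space Y]
    [PartialOrder Y] [OrderClosedTopology Y] [tE : TopologicalSpace E]
    (p : E → Y) (hp : @IsLocalHomeomorph E Y tE (upTop Y) p)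
    (s t : Y → E)
    (hs : @Continuous Y E (upTop Y) tE s) (hps : ∀ y, p (s y) = y)
    (ht : @Continuous Y E (upTop Y) tE t) (hpt : ∀ y, p (t y) = y)
    {ι : Type*} [Nonempty ι] (K : ι → Set Y) (hK : ∀ i, CompSatUp (K i))
    (hdir : ∀ i j : ι, ∃ k : ι, K k ⊆ K i ∩ K j)
    (hagree : ∀ y ∈ ⋂ i, K i, s y = t y) :
    ∃ i : ι, ∀ y ∈ K i, s y = t y := by
  have hUup : @IsOpen Y (upTop Y) {y | s y = t y} :=
    @isOpen_eq_of_sections Y E (upTop Y) tE p hp s t hs hps ht hpt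
  have hUopen : IsOpen {y | s y = t y} :=
    (show IsOpen {y | s y = t y} ∧ IsUpperSet {y | s y = t y} from hUup).1
  have hCcomp : IsCompact {y | s y = t y}ᶜ := hUopen.isClosed_compl.isCompact
  have hclosed : ∀ i, IsClosed (K i) := fun i => isClosed_of_compSatUp (hK i)
  have hempty : {y | s y = t y}ᶜ ∩ ⋂ i, K i = ∅ := by
    ext y
    simp only [Set.mem_inter_iff, Set.mem_compl_iff, Set.mem_setOf_eq, Set.mem_empty_iff_false,
      iff_false, not_and]
    exact fun hne hmem => hne (hagree y hmem)
  have hdir' : Directed (· ⊇ ·) K := fun i j => by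
    obtain ⟨k, hk⟩ := hdir i j
    exact ⟨k, fun y hy => (hk hy).1, fun y hy => (hk hy).2⟩
  obtain ⟨i, hi⟩ := hCcomp.elim_directed_family_closed K hclosed hempty hdir'
  refine ⟨i, fun y hy => ?_⟩
  by_contra hne
  exact Set.eq_empty_iff_forall_notMem.1 hi y ⟨hne, hy⟩
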